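/- For an infinite alphabet A, each generalized cylinder set Z(x,F) is a compact open subset of the full shift Σ_A, and hence Σ_A is zero-dimensional (has a basis of clopen sets). -/

import Mathlib

open Set Filter Topology

/-- Elements of the full shift `Σ_A`: `Option`-valued sequences that stay `none`
once they are `none` (so they are either everywhere-defined infinite sequences,
or finite words followed by `none`s; the empty word is the all-`none` sequence). -/
def IsWordFun {A : Type*} (x : ℕ → Option A) : Prop :=
  ∀ m n : ℕ, m ≤ n → x m = none → x n = none

/-- The full shift `Σ_A = A^ℕ ∪ {finite words over A}`. -/
def FullShift (A : Type*) : Type _ := {x : ℕ → Option A // IsWordFun x}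

namespace FullShift

variable {A B : Type*}

/-- The length of an element of the full shift, in `ℕ∞`. -/
noncomputable def len (x : FullShift A) : ℕ∞ :=
  sInf {n : ℕ∞ | ∃ m : ℕ, n = (m : ℕ∞) ∧ x.1 m = none}

/-- The shift map `σ`, deleting the first letter. -/
def shift (x : FullShift A) : FullShift A :=
  ⟨fun n => x.1 (n + 1), fun m n h hm => x.2 (m + 1) (n + 1) (by omega) hm⟩

/-- The empty word `∅`. -/
def emptyWord : FullShift A := ⟨fun _ => none, fun _ _ _ _ => rfl⟩

/-- The finite word determined by a list. -/
def word (l : List A) : FullShift A :=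
  ⟨fun n => l[n]?, by
    intro m n h hm
    rw [List.getElem?_eq_none_iff] at hm ⊢
    omega⟩

/-- The infinite sequence determined by a function `ℕ → A`. -/
def infSeq (g : ℕ → A) : FullShift A :=
  ⟨fun n => some (g n), by intro m n _ hm; simp at hm⟩

/-- Generalized cylinder set `Z(w, F)`: elements beginning with the finite word `w`
whose next letter, if any, does not lie in the finite set `F`. -/
def Cyl (w : List A) (F : Finset A) : Set (FullShift A) :=
  {y | (∀ i < w.length, y.1 i = w[i]?) ∧ ∀ a ∈ F, y.1 w.length ≠ some a}

/-- The topology on `Σ_A` generated by the generalized cylinder sets. -/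
instance : TopologicalSpace (FullShift A) :=
  TopologicalSpace.generateFrom {S | ∃ (w : List A) (F : Finset A), S = Cyl w F}

/-- A shift space: closed, shift-invariant, with the infinite-extension property. -/
def IsShiftSpace (Λ : Set (FullShift A)) : Prop :=
  IsClosed Λ ∧ (∀ x ∈ Λ, shift x ∈ Λ) ∧
    ∀ x ∈ Λ, ∀ n : ℕ, len x = (n : ℕ∞) →
      {a : A | ∃ z ∈ Λ, (∀ i < n, z.1 i = x.1 i) ∧ z.1 n = some a}.Infinite

/-- `u` occurs as a subblock of `x`. -/
def Occurs (u : List A) (x : FullShift A) : Prop :=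
  ∃ i : ℕ, ∀ j < u.length, x.1 (i + j) = u[j]?

/-- The infinite sequences avoiding every word in `Fb` as a subblock. -/
def XinfL (Fb : Set (List A)) : Set (FullShift A) :=
  {x | (∀ n, x.1 n ≠ none) ∧ ∀ u ∈ Fb, ¬ Occurs u x}

/-- The shift space `X_F` determined by the forbidden words `Fb`: the infinite
sequences avoiding `Fb`, together with the finite words `x` such that for
infinitely many `a ∈ A` some extension `x a y` lies in `X_F^inf`. -/
def XL (Fb : Set (List A)) : Set (FullShift A) :=
  XinfL Fb ∪ {x | ∃ n : ℕ, len x = (n : ℕ∞) ∧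
    {a : A | ∃ z ∈ XinfL Fb, (∀ i < n, z.1 i = x.1 i) ∧ z.1 n = some a}.Infinite}

/-- The infinite sequences all of whose length-`N` windows `v` satisfy `ft v = true`
(i.e. avoiding all length-`N` words `w` with `ft w = 0`). -/
def XinfT {N : ℕ} (ft : (Fin N → A) → Bool) : Set (FullShift A) :=
  {x | (∀ n, x.1 n ≠ none) ∧
    ∀ (i : ℕ) (v : Fin N → A), (∀ j : Fin N, x.1 (i + (j : ℕ)) = some (v j)) → ft v = true}

/-- The shift space `X_f` determined by forbidding the length-`N` words `w`
with `ft w = 0`. -/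
def XT {N : ℕ} (ft : (Fin N → A) → Bool) : Set (FullShift A) :=
  XinfT ft ∪ {x | ∃ n : ℕ, len x = (n : ℕ∞) ∧
    {a : A | ∃ z ∈ XinfT ft, (∀ i < n, z.1 i = x.1 i) ∧ z.1 n = some a}.Infinite}

/-- `Y` is an `M`-step shift space: determined by forbidden words of length `M + 1`,
equivalently by a function `g̃ : B^{M+1} → {0,1}`. -/
def IsStepShift (M : ℕ) (Y : Set (FullShift B)) : Prop :=
  ∃ gt : (Fin (M + 1) → B) → Bool, Y = XT gt

/-- `φ` is a conjugacy from `Λ` onto `Y`: bijective, continuous, shift-commuting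
and length-preserving. -/
def IsConjugacy (Λ : Set (FullShift A)) (Y : Set (FullShift B))
    (φ : FullShift A → FullShift B) : Prop :=
  Set.BijOn φ Λ Y ∧ ContinuousOn φ Λ ∧
    (∀ x ∈ Λ, φ (shift x) = shift (φ x)) ∧ ∀ x ∈ Λ, len (φ x) = len x

/-- `Λ` and `Y` are conjugate shift spaces. -/
def Conjugate (Λ : Set (FullShift A)) (Y : Set (FullShift B)) : Prop :=
  ∃ φ : FullShift A → FullShift B, IsConjugacy Λ Y φ

/-- The periodic sequence `(x_1 ⋯ x_M b)^∞` of period `M + 1`. -/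
def per (M : ℕ) (x : Fin M → A) (b : A) : ℕ → A :=
  fun n => if h : n % (M + 1) < M then x ⟨n % (M + 1), h⟩ else b

end FullShift

section Aux

open FullShift TopologicalSpace

variable {A : Type*}

lemma FullShift.isOpen_cyl (w : List A) (F : Finset A) : IsOpen (Cyl w F) :=
  isOpen_generateFrom_of_mem ⟨w, F, rfl⟩

/-- The list of the first `k` letters of `y`, assuming they are defined. -/
noncomputable def FullShift.pre [Nonempty A] (y : FullShift A) (k : ℕ) : List A :=
  List.ofFn (fun j : Fin k => (y.1 j).getD (Classical.arbitrary A))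

lemma FullShift.pre_length [Nonempty A] (y : FullShift A) (k : ℕ) : (pre y k).length = k :=
  List.length_ofFn

lemma FullShift.pre_getElem? [Nonempty A] (y : FullShift A) (k : ℕ) {i : ℕ} (hi : i < k)
    (h : y.1 i ≠ none) : (pre y k)[i]? = y.1 i := by
  rcases Option.ne_none_iff_exists'.1 h with ⟨a, ha⟩
  simp [pre, List.getElem?_ofFn, List.ofFnNthVal, hi, ha]

lemma FullShift.isClosed_cyl [Nonempty A] (w : List A) (F : Finset A) :
    IsClosed (Cyl w F) := by
  rw [← isOpen_compl_iff, isOpen_iff_forall_mem_open]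
  intro y hy
  rw [Set.mem_compl_iff, Cyl, Set.mem_setOf_eq, not_and_or] at hy
  rcases hy with hy | hy
  · push_neg at hy
    obtain ⟨i, hi, hne⟩ := hy
    rcases Option.eq_none_or_eq_some (y.1 i) with hnone | ⟨b, hb⟩
    · -- y has a `none` at or before position i < w.length
      have hex : ∃ m, y.1 m = none := ⟨i, hnone⟩
      classical
      set m := Nat.find hex with hm
      have hmnone : y.1 m = none := Nat.find_spec hex
      have hmle : m ≤ i := Nat.find_min' hex hnone
      have hmw : m < w.length := lt_of_le_of_lt hmle hi
      refine ⟨Cyl (pre y m) {w[m]}, ?_, isOpen_cyl _ _, ?_⟩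
      · intro z hz
        simp only [Set.mem_compl_iff, Cyl, Set.mem_setOf_eq, not_and_or]
        left
        push_neg
        refine ⟨m, hmw, ?_⟩
        have := hz.2 w[m] (Finset.mem_singleton_self _)
        rw [pre_length] at this
        rw [List.getElem?_eq_getElem hmw]
        exact this
      · constructor
        · intro j hj
          rw [pre_length] at hj
          exact (pre_getElem? y m hj (Nat.find_min hex hj)).symm
        · intro a _
          rw [pre_length, hmnone]
          simp
    · -- y.1 i = some b with some b ≠ w[i]?
      have hsome : ∀ j ≤ i, y.1 j ≠ none := by
        intro j hj hjn
        rw [y.2 j i hj hjn] at hb; simp at hb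
      refine ⟨Cyl (pre y (i + 1)) ∅, ?_, isOpen_cyl _ _, ?_⟩
      · intro z hz
        simp only [Set.mem_compl_iff, Cyl, Set.mem_setOf_eq, not_and_or]
        left
        push_neg
        refine ⟨i, hi, ?_⟩
        have := hz.1 i (by rw [pre_length]; omega)
        rw [this, pre_getElem? y (i + 1) (by omega) (hsome i le_rfl)]
        exact hne
      · constructor
        · intro j hj
          rw [pre_length] at hj
          exact (pre_getElem? y (i + 1) hj (hsome j (by omega))).symm
        · intro a ha
          exact absurd ha (Finset.notMem_empty a)
  · push_neg at hy
    obtain ⟨a, haF, ha⟩ := hy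
    have hsome : ∀ j ≤ w.length, y.1 j ≠ none := by
      intro j hj hjn
      rw [y.2 j w.length hj hjn] at ha; simp at ha
    refine ⟨Cyl (pre y (w.length + 1)) ∅, ?_, isOpen_cyl _ _, ?_⟩
    · intro z hz
      simp only [Set.mem_compl_iff, Cyl, Set.mem_setOf_eq, not_and_or]
      right
      push_neg
      refine ⟨a, haF, ?_⟩
      have := hz.1 w.length (by rw [pre_length]; omega)
      rw [this, pre_getElem? y (w.length + 1) (by omega) (hsome _ le_rfl), ha]
    · constructor
      · intro j hj
        rw [pre_length] at hj
        exact (pre_getElem? y (w.length + 1) hj (hsome j (by omega))).symm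
      · intro a ha
        exact absurd ha (Finset.notMem_empty a)

lemma FullShift.isCompact_cyl [Infinite A] (w : List A) (F : Finset A) :
    IsCompact (Cyl w F) := by
  classical
  rw [isCompact_iff_ultrafilter_le_nhds]
  intro f hf
  rw [le_principal_iff] at hf
  -- the coordinatewise "value" sets
  set S : ℕ → A → Set (FullShift A) := fun n a => {y : FullShift A | y.1 n = some a} with hSdef
  have huniq : ∀ n a b, S n a ∈ f → S n b ∈ f → a = b := by
    intro n a b ha hb
    obtain ⟨y, hya, hyb⟩ := Ultrafilter.nonempty_of_mem (Filter.inter_mem ha hb)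
    rw [Set.mem_setOf_eq] at hya hyb
    rw [hya] at hyb
    exact Option.some_injective A hyb
  -- candidate limit values
  set xbar : ℕ → Option A := fun n =>
    if h : ∃ a, S n a ∈ f then some h.choose else none with hxbar
  have L1 : ∀ n a, xbar n = some a → S n a ∈ f := by
    intro n a h
    by_cases hh : ∃ a, S n a ∈ f
    · have e : xbar n = some hh.choose := dif_pos hh
      rw [e, Option.some_inj] at h
      rw [← h]; exact hh.choose_spec
    · have e : xbar n = none := dif_neg hh
      rw [e] at h; simp at h
  have L1' : ∀ n a, S n a ∈ f → xbar n = some a := by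
    intro n a h
    have hh : ∃ a, S n a ∈ f := ⟨a, h⟩
    show (if h : ∃ a, S n a ∈ f then some h.choose else none) = some a
    rw [dif_pos hh]
    exact congrArg some (huniq n _ a hh.choose_spec h)
  have L2 : ∀ n, xbar n = none → ∀ a, S n a ∉ f := by
    intro n h a ha
    rw [L1' n a ha] at h
    simp at h
  -- the limit point
  set x : FullShift A :=
    ⟨fun n => if ∃ k ≤ n, xbar k = none then none else xbar n, by
      intro m n hmn hm
      by_cases h : ∃ k ≤ n, xbar k = none
      · exact if_pos h
      · exfalso
        by_cases h' : ∃ k ≤ m, xbar k = none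
        · obtain ⟨k, hk, hkn⟩ := h'
          exact h ⟨k, hk.trans hmn, hkn⟩
        · have hm' : (if ∃ k ≤ m, xbar k = none then none else xbar m) = none := hm
          rw [if_neg h'] at hm'
          exact h ⟨m, hmn, hm'⟩⟩ with hxdef
  have hx_some : ∀ n a, x.1 n = some a → xbar n = some a := by
    intro n a h
    by_cases hh : ∃ k ≤ n, xbar k = none
    · have e : x.1 n = none := if_pos hh
      rw [e] at h; simp at h
    · have e : x.1 n = xbar n := if_neg hh
      rw [← e]; exact h
  have hx_eq : ∀ n, (∀ k ≤ n, xbar k ≠ none) → x.1 n = xbar n := by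
    intro n h
    show (if ∃ k ≤ n, xbar k = none then none else xbar n) = xbar n
    rw [if_neg]
    push_neg
    exact h
  refine ⟨x, ?_, ?_⟩
  · -- x ∈ Cyl w F
    have hpre : ∀ i (hi : i < w.length), xbar i = some (w[i]'hi) := by
      intro i hi
      apply L1'
      refine Filter.mem_of_superset hf ?_
      intro y hy
      have := hy.1 i hi
      rw [Set.mem_setOf_eq, this, List.getElem?_eq_getElem hi]
    constructor
    · intro i hi
      rw [hx_eq i (fun k hk => by rw [hpre k (lt_of_le_of_lt hk hi)]; simp),
        hpre i hi, List.getElem?_eq_getElem hi]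
    · intro a haF h
      have hxa : xbar w.length = some a := hx_some _ _ h
      have h1 : S w.length a ∈ f := L1 _ _ hxa
      have h2 : (S w.length a)ᶜ ∈ f := by
        refine Filter.mem_of_superset hf ?_
        intro y hy
        exact hy.2 a haF
      have hempty : (∅ : Set (FullShift A)) ∈ f := by
        have := Filter.inter_mem h1 h2
        rwa [Set.inter_compl_self] at this
      exact (Ultrafilter.nonempty_of_mem hempty).ne_empty rfl
  · -- convergence
    rw [le_nhds_iff]
    intro s hxs hs
    have hs' : TopologicalSpace.GenerateOpen
        {S | ∃ (w : List A) (F : Finset A), S = Cyl w F} s := hs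
    clear hs
    induction hs' with
    | basic t ht =>
      obtain ⟨w', F', rfl⟩ := ht
      obtain ⟨h1, h2⟩ := hxs
      have hxsome : ∀ i (hi : i < w'.length), x.1 i = some (w'[i]'hi) := by
        intro i hi
        rw [h1 i hi, List.getElem?_eq_getElem hi]
      have hxbarsome : ∀ i (hi : i < w'.length), xbar i = some (w'[i]'hi) :=
        fun i hi => hx_some i _ (hxsome i hi)
      have hT : {y : FullShift A | ∀ i < w'.length, y.1 i = w'[i]?} ∈ f := by
        have : (⋂ i ∈ Finset.range w'.length, {y : FullShift A | y.1 i = w'[i]?}) ∈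
            (f : Filter (FullShift A)) := by
          rw [Filter.biInter_finset_mem]
          intro i hi
          rw [Finset.mem_range] at hi
          have := L1 i (w'[i]'hi) (hxbarsome i hi)
          rw [List.getElem?_eq_getElem hi]
          exact this
        refine Filter.mem_of_superset this ?_
        intro y hy i hi
        have := Set.mem_iInter₂.1 hy i (Finset.mem_range.2 hi)
        exact this
      rcases Option.eq_none_or_eq_some (x.1 w'.length) with hnone | ⟨b, hb⟩
      · -- the tail remains free: use cofiniteness
        have hxbarnone : xbar w'.length = none := by
          by_contra hne
          rcases Option.ne_none_iff_exists'.1 hne with ⟨c, hc⟩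
          have : x.1 w'.length = xbar w'.length := by
            apply hx_eq
            intro k hk
            rcases Nat.lt_or_ge k w'.length with hk' | hk'
            · rw [hxbarsome k hk']; simp
            · have : k = w'.length := le_antisymm hk hk'
              rw [this, hc]; simp
          rw [hnone, hc] at this; simp at this
        have hcompl : (⋂ a ∈ F', (S w'.length a)ᶜ) ∈ (f : Filter (FullShift A)) := by
          rw [Filter.biInter_finset_mem]
          intro a _
          exact (Ultrafilter.compl_mem_iff_notMem).2 (L2 _ hxbarnone a)
        refine Filter.mem_of_superset (Filter.inter_mem hT hcompl) ?_
        rintro y ⟨hy1, hy2⟩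
        refine ⟨hy1, fun a ha => ?_⟩
        have := Set.mem_iInter₂.1 hy2 a ha
        exact this
      · have hbF : b ∉ F' := fun hbF => h2 b hbF hb
        have hSb : S w'.length b ∈ f := L1 _ _ (hx_some _ _ hb)
        refine Filter.mem_of_superset (Filter.inter_mem hT hSb) ?_
        rintro y ⟨hy1, hy2⟩
        refine ⟨hy1, fun a ha hya => ?_⟩
        rw [Set.mem_setOf_eq] at hy2
        rw [hy2] at hya
        exact hbF (by rwa [← Option.some_inj.1 hya] at ha)
    | univ => exact Filter.univ_mem
    | inter t₁ t₂ _ _ ih₁ ih₂ =>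
      exact Filter.inter_mem (ih₁ hxs.1) (ih₂ hxs.2)
    | sUnion T _ ih =>
      obtain ⟨t, htT, hxt⟩ := hxs
      exact Filter.mem_of_superset (ih t htT hxt) (Set.subset_sUnion_of_mem htT)

end Aux

/-- Each generalized cylinder is compact and open; hence `Σ_A` has a
basis of clopen sets (is zero-dimensional). -/
theorem stmt2 {A : Type*} [Infinite A] :
    (∀ (w : List A) (F : Finset A),
      IsCompact (FullShift.Cyl w F) ∧ IsOpen (FullShift.Cyl w F)) ∧
    ∃ b : Set (Set (FullShift A)),
      TopologicalSpace.IsTopologicalBasis b ∧ ∀ s ∈ b, IsClopen s := by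
  refine ⟨fun w F => ⟨FullShift.isCompact_cyl w F, FullShift.isOpen_cyl w F⟩, ?_⟩
  refine ⟨(fun f => ⋂₀ f) ''
    {f | f.Finite ∧ f ⊆ {S | ∃ (w : List A) (F : Finset A), S = FullShift.Cyl w F}},
    TopologicalSpace.isTopologicalBasis_of_subbasis rfl, ?_⟩
  rintro s ⟨f, ⟨hfin, hsub⟩, rfl⟩
  show IsClopen (⋂₀ f)
  rw [Set.sInter_eq_biInter]
  refine hfin.isClopen_biInter ?_
  intro t ht
  obtain ⟨w, F, rfl⟩ := hsub ht
  exact ⟨FullShift.isClosed_cyl w F, FullShift.isOpen_cyl w F⟩
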